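/- Assume λθ > Nμ. There exists a unique δ_cap ∈ (0, N/(λθ)) such that Δ_cr(δ_cap) = Δ_cr(0), with Δ_cr(δ) > Δ_cr(0) for 0 < δ < δ_cap and Δ_cr(δ) < Δ_cr(0) for δ_cap < δ < N/(λθ). -/

import Mathlib

open Real Set

noncomputable def Dcr (lam mu th : ℝ) (N : ℕ) (d : ℝ) : ℝ :=
  Real.arccos (-(d * lam^2 * th^2 + (N : ℝ)^2 * mu) / ((N : ℝ) * lam * th * (1 + d * mu))) *
    Real.sqrt (((N : ℝ)^2 - d^2 * lam^2 * th^2) / (lam^2 * th^2 - (N : ℝ)^2 * mu^2))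

noncomputable def uu (x mu : ℝ) (N : ℕ) (d : ℝ) : ℝ :=
  -(d * x^2 + (N : ℝ)^2 * mu) / ((N : ℝ) * x * (1 + d * mu))

noncomputable def vv (x mu : ℝ) (N : ℕ) (d : ℝ) : ℝ :=
  ((N : ℝ)^2 - d^2 * x^2) / (x^2 - (N : ℝ)^2 * mu^2)

noncomputable def GG (x mu : ℝ) (N : ℕ) (d : ℝ) : ℝ :=
  Real.arccos (uu x mu N d) * Real.sqrt (vv x mu N d)

lemma key_id (x mu : ℝ) (N : ℕ) (hx : x ≠ 0) (hN : (N:ℝ) ≠ 0) {d : ℝ} (hd : 1 + d*mu ≠ 0) :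
    1 - (uu x mu N d)^2
      = (x^2 - (N:ℝ)^2*mu^2) * ((N:ℝ)^2 - d^2*x^2) / ((N:ℝ)*x*(1+d*mu))^2 := by
  unfold uu
  field_simp
  ring

lemma deriv_value (K Dn mu d x n A r s : ℝ) (hr : r ≠ 0) (hs : s ≠ 0)
    (hdm : 1 + d*mu ≠ 0) (hn : n ≠ 0) (hxx : x ≠ 0)
    (hr2 : r^2 = K) (hDn : Dn = n*x*(1+d*mu)) :
    (-(1/(r*s/Dn)) * (-K/(n*x*(1+d*mu)^2))) * (s/r)
      + A * ((-(2*d*x^2)/K) / (2*(s/r)))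
    = 1/(1+d*mu) - d*x^2*A/(r*s) := by
  subst hDn
  subst hr2
  have hK : r^2 ≠ 0 := pow_ne_zero 2 hr
  field_simp
  ring

noncomputable def phi (x mu : ℝ) (N : ℕ) (d : ℝ) : ℝ :=
  1/(1 + d*mu) - d * x^2 * Real.arccos (uu x mu N d)
      / (Real.sqrt (x^2 - (N:ℝ)^2*mu^2) * Real.sqrt ((N:ℝ)^2 - d^2*x^2))

lemma GG_hasDeriv (x mu : ℝ) (N : ℕ) (hx : 0 < x) (hmu : 0 < mu)
    (hN : 0 < N) (hgt : (N:ℝ)*mu < x) {d : ℝ} (hd0 : 0 ≤ d) (hdb : d < (N:ℝ)/x) :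
    HasDerivAt (GG x mu N) (phi x mu N d) d := by
  set n : ℝ := (N:ℝ) with hn_def
  have hn : (0:ℝ) < n := by rw [hn_def]; exact_mod_cast hN
  have hK : 0 < x^2 - n^2*mu^2 := by nlinarith [mul_pos hn hmu]
  have hdm : 0 < 1 + d*mu := by nlinarith
  have hP : 0 < n^2 - d^2*x^2 := by
    have h1 : d * x < n := (lt_div_iff₀ hx).mp hdb
    nlinarith [mul_nonneg hd0 hx.le]
  have hDnpos : 0 < n*x*(1+d*mu) := by positivity
  -- bounds on uu
  have hu2 : 0 < 1 - (uu x mu N d)^2 := by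
    rw [key_id x mu N hx.ne' hn.ne' hdm.ne']
    positivity
  have hu_lt : uu x mu N d < 1 := by nlinarith [hu2]
  have hu_gt : -1 < uu x mu N d := by nlinarith [hu2]
  -- derivative of uu
  have h_num : HasDerivAt (fun y => -(y * x^2 + n^2*mu)) (-(x^2)) d := by
    have h := (((hasDerivAt_id d).mul_const (x^2)).add_const (n^2*mu)).neg
    have e : (fun y => -(y * x^2 + n^2*mu)) = -fun y => id y * x^2 + n^2*mu := by
      ext y; simp
    rw [e, show -(x^2) = -(1 * x^2) by ring]
    exact h
  have h_den : HasDerivAt (fun y => n*x*(1+y*mu)) (n*x*mu) d := by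
    simpa using (((hasDerivAt_id d).mul_const mu).const_add 1).const_mul (n*x)
  have hu : HasDerivAt (uu x mu N) (-(x^2 - n^2*mu^2)/(n*x*(1+d*mu)^2)) d := by
    have h0 := h_num.div h_den hDnpos.ne'
    have : HasDerivAt (uu x mu N)
        ((-(x^2) * (n*x*(1+d*mu)) - -(d * x^2 + n^2*mu) * (n*x*mu)) / (n*x*(1+d*mu))^2) d := h0
    convert this using 1
    field_simp
    ring
  have harccos : HasDerivAt (fun y => Real.arccos (uu x mu N y))
      (-(1/Real.sqrt (1 - (uu x mu N d)^2)) * (-(x^2 - n^2*mu^2)/(n*x*(1+d*mu)^2))) d :=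
    (Real.hasDerivAt_arccos hu_gt.ne' hu_lt.ne).comp d hu
  -- derivative of vv
  have hv : HasDerivAt (vv x mu N) (-(2*d*x^2) / (x^2 - n^2*mu^2)) d := by
    have h1 : HasDerivAt (fun y : ℝ => n^2 - y^2*x^2) (-(2*d*x^2)) d := by
      have := ((hasDerivAt_pow 2 d).mul_const (x^2)).const_sub (n^2)
      simpa using this
    have := h1.div_const (x^2 - n^2*mu^2)
    exact this
  have hvpos : 0 < vv x mu N d := div_pos hP hK
  have hsv := hv.sqrt hvpos.ne'
  have hprod := harccos.mul hsv
  have hGG : HasDerivAt (GG x mu N)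
      ((-(1/Real.sqrt (1 - (uu x mu N d)^2)) * (-(x^2 - n^2*mu^2)/(n*x*(1+d*mu)^2)))
          * Real.sqrt (vv x mu N d)
        + Real.arccos (uu x mu N d)
          * ((-(2*d*x^2) / (x^2 - n^2*mu^2)) / (2 * Real.sqrt (vv x mu N d)))) d := hprod
  convert hGG using 1
  -- now deal with the sqrt values
  set r := Real.sqrt (x^2 - n^2*mu^2) with hr_def
  set s := Real.sqrt (n^2 - d^2*x^2) with hs_def
  have hr : 0 < r := Real.sqrt_pos.mpr hK
  have hs : 0 < s := Real.sqrt_pos.mpr hP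
  have hr2 : r^2 = x^2 - n^2*mu^2 := Real.sq_sqrt hK.le
  have hs2 : s^2 = n^2 - d^2*x^2 := Real.sq_sqrt hP.le
  have hsq1 : Real.sqrt (1 - (uu x mu N d)^2) = r*s/(n*x*(1+d*mu)) := by
    rw [show 1 - (uu x mu N d)^2 = (r*s/(n*x*(1+d*mu)))^2 by
      rw [div_pow, mul_pow, hr2, hs2, key_id x mu N hx.ne' hn.ne' hdm.ne']]
    exact Real.sqrt_sq (by positivity)
  have hsqv : Real.sqrt (vv x mu N d) = s / r := by
    rw [show vv x mu N d = (s/r)^2 by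
      rw [div_pow, hr2, hs2]; rfl]
    exact Real.sqrt_sq (by positivity)
  rw [hsq1, hsqv]
  unfold phi
  rw [← hr_def, ← hs_def]
  exact (deriv_value (x^2 - n^2*mu^2) (n*x*(1+d*mu)) mu d x n
    (Real.arccos (uu x mu N d)) r s hr.ne' hs.ne' hdm.ne' hn.ne' hx.ne' hr2 rfl).symm

lemma arccos_anti {a c : ℝ} (h : a ≤ c) : Real.arccos c ≤ Real.arccos a := by
  rw [Real.arccos_eq_pi_div_two_sub_arcsin, Real.arccos_eq_pi_div_two_sub_arcsin]
  have := Real.monotone_arcsin h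
  linarith


lemma concave_min_lt {f : ℝ → ℝ} {b : ℝ} (hconc : StrictConcaveOn ℝ (Icc 0 b) f)
    {a t c' : ℝ} (ha : 0 ≤ a) (hc' : c' ≤ b) (hat : a < t) (htc : t < c') :
    min (f a) (f c') < f t := by
  have hac : a < c' := hat.trans htc
  have hca : c' - a ≠ 0 := sub_ne_zero.2 hac.ne'
  have hmem_a : a ∈ Icc 0 b := ⟨ha, by linarith⟩
  have hmem_c : c' ∈ Icc 0 b := ⟨by linarith, hc'⟩
  have h1 : 0 < (c' - t)/(c' - a) := div_pos (by linarith) (by linarith)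
  have h2 : 0 < (t - a)/(c' - a) := div_pos (by linarith) (by linarith)
  have hsum : (c' - t)/(c' - a) + (t - a)/(c' - a) = 1 := by
    rw [← add_div, show c' - t + (t - a) = c' - a by ring, div_self hca]
  have hlt := hconc.2 hmem_a hmem_c (ne_of_lt hac) h1 h2 hsum
  rw [smul_eq_mul, smul_eq_mul, smul_eq_mul, smul_eq_mul] at hlt
  have hcomb : (c' - t)/(c' - a) * a + (t - a)/(c' - a) * c' = t := by
    field_simp
    ring
  rw [hcomb] at hlt
  have hm1 := mul_le_mul_of_nonneg_left (min_le_left (f a) (f c')) h1.le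
  have hm2 := mul_le_mul_of_nonneg_left (min_le_right (f a) (f c')) h2.le
  have hmm : (c' - t)/(c' - a) * min (f a) (f c')
      + (t - a)/(c' - a) * min (f a) (f c') = min (f a) (f c') := by
    rw [← add_mul, hsum, one_mul]
  linarith

lemma unimodal_structure {f : ℝ → ℝ} {b : ℝ} (hb : 0 < b)
    (hcont : ContinuousOn f (Icc 0 b)) (hconc : StrictConcaveOn ℝ (Icc 0 b) f)
    (hderiv0 : HasDerivAt f 1 0) (hfb : f b = 0) (hf0 : 0 < f 0) :
    ∃ dcap ∈ Ioo (0:ℝ) b, f dcap = f 0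
      ∧ (∀ d, 0 < d → d < dcap → f d > f 0)
      ∧ (∀ d, dcap < d → d < b → f d < f 0)
      ∧ (∀ d' ∈ Ioo (0:ℝ) b, f d' = f 0 → d' = dcap) := by
  obtain ⟨d0, hd0slope, hd0mem⟩ :
      ∃ y, 0 < slope f 0 y ∧ y ∈ Ioo (0:ℝ) b := by
    have hslope := hasDerivAt_iff_tendsto_slope.mp hderiv0
    have hev : ∀ᶠ y in nhdsWithin (0:ℝ) {(0:ℝ)}ᶜ, 0 < slope f 0 y :=
      hslope.eventually (eventually_gt_nhds one_pos)
    have hev2 : ∀ᶠ y in nhdsWithin (0:ℝ) (Ioi 0), 0 < slope f 0 y :=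
      hev.filter_mono (nhdsWithin_mono 0 (fun y hy => by
        simp only [mem_compl_iff, mem_singleton_iff]
        exact ne_of_gt hy))
    have hmem : ∀ᶠ y in nhdsWithin (0:ℝ) (Ioi 0), y ∈ Ioo (0:ℝ) b :=
      Ioo_mem_nhdsGT_of_mem ⟨le_rfl, hb⟩
    exact ((hev2.and hmem).exists)
  have hGd0 : f 0 < f d0 := by
    rw [slope_def_field] at hd0slope
    have hd0pos : (0:ℝ) < d0 - 0 := by have := hd0mem.1; linarith
    nlinarith [mul_pos hd0slope hd0pos,
      div_mul_cancel₀ (f d0 - f 0) (ne_of_gt hd0pos)]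
  obtain ⟨dcap, hdcap_mem, hdcap_eq⟩ : ∃ t ∈ Ioo d0 b, f t = f 0 := by
    have hsub : Icc d0 b ⊆ Icc 0 b := Icc_subset_Icc hd0mem.1.le le_rfl
    have h := intermediate_value_Ioo' hd0mem.2.le (hcont.mono hsub)
    have hc : f 0 ∈ Ioo (f b) (f d0) := by
      rw [hfb]; exact ⟨hf0, hGd0⟩
    obtain ⟨t, ht, het⟩ := h hc
    exact ⟨t, ht, het⟩
  have hdcap_Ioo : dcap ∈ Ioo (0:ℝ) b := ⟨hd0mem.1.trans hdcap_mem.1, hdcap_mem.2⟩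
  have prop1 : ∀ d, 0 < d → d < dcap → f 0 < f d := by
    intro d hd1 hd2
    have hk := concave_min_lt hconc le_rfl hdcap_Ioo.2.le hd1 hd2
    rwa [hdcap_eq, min_self] at hk
  have prop2 : ∀ d, dcap < d → d < b → f d < f 0 := by
    intro d hd1 hd2
    by_contra hcon
    push_neg at hcon
    have hk := concave_min_lt hconc le_rfl hd2.le hdcap_Ioo.1 hd1
    rw [min_eq_left hcon, hdcap_eq] at hk
    exact lt_irrefl _ hk
  refine ⟨dcap, hdcap_Ioo, hdcap_eq, prop1, prop2, ?_⟩
  intro d' hd' heq'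
  rcases lt_trichotomy d' dcap with h | h | h
  · exact absurd heq' (by have := prop1 d' hd'.1 h; linarith)
  · exact h
  · exact absurd heq' (by have := prop2 d' h hd'.2; linarith)

theorem G_main (x mu : ℝ) (N : ℕ) (hN : 0 < N) (hx : 0 < x) (hmu : 0 < mu)
    (hgt : (N:ℝ)*mu < x) :
    ∃ dcap ∈ Set.Ioo (0 : ℝ) ((N : ℝ) / x),
      GG x mu N dcap = GG x mu N 0
      ∧ (∀ d, 0 < d → d < dcap → GG x mu N d > GG x mu N 0)
      ∧ (∀ d, dcap < d → d < (N : ℝ) / x → GG x mu N d < GG x mu N 0)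
      ∧ (∀ d' ∈ Set.Ioo (0 : ℝ) ((N : ℝ) / x),
          GG x mu N d' = GG x mu N 0 → d' = dcap) := by
  obtain ⟨n, hn_def⟩ : ∃ n : ℝ, n = (N:ℝ) := ⟨_, rfl⟩
  obtain ⟨b, hb'⟩ : ∃ b : ℝ, b = (N:ℝ) / x := ⟨_, rfl⟩
  rw [← hb']
  have hn : (0:ℝ) < n := by rw [hn_def]; exact_mod_cast hN
  have hgtn : n * mu < x := by rw [hn_def]; exact hgt
  have hb_def : b = n / x := by rw [hb', hn_def]
  have hK : 0 < x^2 - n^2*mu^2 := by nlinarith [mul_pos hn hmu]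
  have hb : 0 < b := by rw [hb_def]; exact div_pos hn hx
  -- basic facts
  have hdm : ∀ d : ℝ, 0 ≤ d → 0 < 1 + d*mu := fun d hd => by nlinarith
  have hP : ∀ d : ℝ, 0 ≤ d → d < b → 0 < n^2 - d^2*x^2 := by
    intro d h1 h2
    rw [hb_def] at h2
    have h3 : d * x < n := (lt_div_iff₀ hx).mp h2
    nlinarith [mul_nonneg h1 hx.le]
  have hult : ∀ d : ℝ, 0 ≤ d → d < b → -1 < uu x mu N d ∧ uu x mu N d < 1 := by
    intro d h1 h2
    have hu2 : 0 < 1 - (uu x mu N d)^2 := by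
      rw [key_id x mu N hx.ne' (by rw [← hn_def]; exact hn.ne') (hdm d h1).ne', ← hn_def]
      exact div_pos (mul_pos hK (hP d h1 h2))
        (pow_pos (mul_pos (mul_pos hn hx) (hdm d h1)) 2)
    constructor <;> nlinarith [hu2]
  -- uu is strictly decreasing
  have huu_anti : ∀ d1 d2 : ℝ, 0 ≤ d1 → d1 < d2 → uu x mu N d2 < uu x mu N d1 := by
    intro d1 d2 h1 h12
    have hp1 : 0 < n*x*(1+d1*mu) := mul_pos (mul_pos hn hx) (hdm d1 h1)
    have hp2 : 0 < n*x*(1+d2*mu) := mul_pos (mul_pos hn hx) (hdm d2 (by linarith))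
    unfold uu
    rw [← hn_def, div_lt_div_iff₀ hp2 hp1]
    nlinarith [mul_pos (mul_pos hn hx) (mul_pos (sub_pos.2 h12) hK)]
  -- continuity
  have hGcont : ContinuousOn (GG x mu N) (Icc 0 b) := by
    unfold GG uu vv
    apply ContinuousOn.mul
    · apply Real.continuous_arccos.comp_continuousOn
      apply ContinuousOn.div
        ((((continuous_id'.mul continuous_const).add continuous_const).neg).continuousOn)
        ((continuous_const.mul (continuous_const.add
          (continuous_id'.mul continuous_const))).continuousOn)
      intro d hd
      have h1 := hdm d hd.1
      rw [← hn_def]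
      exact ne_of_gt (mul_pos (mul_pos hn hx) h1)
    · exact (Real.continuous_sqrt.comp
        ((continuous_const.sub ((continuous_pow 2).mul continuous_const)).div_const _)).continuousOn
  -- endpoint values
  have hGb : GG x mu N b = 0 := by
    have h0 : n^2 - b^2*x^2 = 0 := by rw [hb_def]; field_simp; ring
    unfold GG vv
    rw [← hn_def, h0, zero_div, Real.sqrt_zero, mul_zero]
  have hG0pos : 0 < GG x mu N 0 := by
    unfold GG
    apply mul_pos (Real.arccos_pos.2 (hult 0 le_rfl hb).2)
    apply Real.sqrt_pos.2
    unfold vv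
    rw [← hn_def]
    exact div_pos (by nlinarith) hK
  -- phi is strictly antitone on Ioo 0 b
  have hphi_anti : ∀ d1 ∈ Ioo (0:ℝ) b, ∀ d2 ∈ Ioo (0:ℝ) b, d1 < d2 →
      phi x mu N d2 < phi x mu N d1 := by
    intro d1 hd1 d2 hd2 h12
    have hA12 : Real.arccos (uu x mu N d1) ≤ Real.arccos (uu x mu N d2) :=
      arccos_anti (huu_anti d1 d2 hd1.1.le h12).le
    have hA1pos : 0 < Real.arccos (uu x mu N d1) :=
      Real.arccos_pos.2 (hult d1 hd1.1.le hd1.2).2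
    have hP1 := hP d1 hd1.1.le hd1.2
    have hP2 := hP d2 hd2.1.le hd2.2
    have hr : 0 < Real.sqrt (x^2 - n^2*mu^2) := Real.sqrt_pos.2 hK
    have hs1 : 0 < Real.sqrt (n^2 - d1^2*x^2) := Real.sqrt_pos.2 hP1
    have hs2 : 0 < Real.sqrt (n^2 - d2^2*x^2) := Real.sqrt_pos.2 hP2
    have hs21 : Real.sqrt (n^2 - d2^2*x^2) < Real.sqrt (n^2 - d1^2*x^2) := by
      apply Real.sqrt_lt_sqrt hP2.le
      nlinarith [mul_pos (mul_pos (sub_pos.2 h12)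
        (by linarith [hd1.1] : (0:ℝ) < d1 + d2)) (pow_pos hx 2)]
    have hnum : d1*x^2*Real.arccos (uu x mu N d1) < d2*x^2*Real.arccos (uu x mu N d2) := by
      calc d1*x^2*Real.arccos (uu x mu N d1)
          < d2*x^2*Real.arccos (uu x mu N d1) := by
            apply mul_lt_mul_of_pos_right _ hA1pos
            nlinarith [mul_pos (sub_pos.2 h12) (pow_pos hx 2)]
        _ ≤ d2*x^2*Real.arccos (uu x mu N d2) := by
            exact mul_le_mul_of_nonneg_left hA12
              (mul_nonneg hd2.1.le (by positivity))
    have hterm2 : d1*x^2*Real.arccos (uu x mu N d1)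
          / (Real.sqrt (x^2 - n^2*mu^2) * Real.sqrt (n^2 - d1^2*x^2))
        < d2*x^2*Real.arccos (uu x mu N d2)
          / (Real.sqrt (x^2 - n^2*mu^2) * Real.sqrt (n^2 - d2^2*x^2)) := by
      rw [div_lt_div_iff₀ (mul_pos hr hs1) (mul_pos hr hs2)]
      calc d1*x^2*Real.arccos (uu x mu N d1)
            * (Real.sqrt (x^2 - n^2*mu^2) * Real.sqrt (n^2 - d2^2*x^2))
          < d2*x^2*Real.arccos (uu x mu N d2)
            * (Real.sqrt (x^2 - n^2*mu^2) * Real.sqrt (n^2 - d2^2*x^2)) := by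
            exact mul_lt_mul_of_pos_right hnum (mul_pos hr hs2)
        _ < d2*x^2*Real.arccos (uu x mu N d2)
            * (Real.sqrt (x^2 - n^2*mu^2) * Real.sqrt (n^2 - d1^2*x^2)) := by
            apply mul_lt_mul_of_pos_left (mul_lt_mul_of_pos_left hs21 hr)
            exact mul_pos (mul_pos hd2.1 (pow_pos hx 2)) (hA1pos.trans_le hA12)
    have ht1 : 1/(1 + d2*mu) < 1/(1 + d1*mu) := by
      apply one_div_lt_one_div_of_lt (hdm d1 hd1.1.le)
      have := mul_lt_mul_of_pos_right h12 hmu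
      linarith
    unfold phi
    rw [← hn_def]
    exact sub_lt_sub ht1 hterm2
  -- strict concavity
  have hconc : StrictConcaveOn ℝ (Icc 0 b) (GG x mu N) := by
    apply StrictAntiOn.strictConcaveOn_of_deriv (convex_Icc 0 b) hGcont
    rw [interior_Icc]
    intro d1 h1 d2 h2 h12
    rw [(GG_hasDeriv x mu N hx hmu hN hgt h1.1.le (hb' ▸ h1.2)).deriv,
        (GG_hasDeriv x mu N hx hmu hN hgt h2.1.le (hb' ▸ h2.2)).deriv]
    exact hphi_anti d1 h1 d2 h2 h12
  have hG0deriv : HasDerivAt (GG x mu N) 1 0 := by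
    have h0 := GG_hasDeriv x mu N hx hmu hN hgt le_rfl (hb' ▸ hb)
    have hphi0 : phi x mu N 0 = 1 := by unfold phi; norm_num
    rwa [hphi0] at h0
  exact unimodal_structure hb hGcont hconc hG0deriv hGb hG0pos

lemma Dcr_eq_G (lam mu th : ℝ) (N : ℕ) : Dcr lam mu th N = GG (lam*th) mu N := by
  funext d
  unfold Dcr GG uu vv
  congr 2 <;> ring

theorem dcap_exists_unique
    (lam mu th : ℝ) (N : ℕ) (hN : 0 < N)
    (hlam : 0 < lam) (hmu : 0 < mu) (hth : 0 < th)
    (hgt : lam * th > N * mu) :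
    ∃ dcap ∈ Set.Ioo (0 : ℝ) ((N : ℝ) / (lam * th)),
      Dcr lam mu th N dcap = Dcr lam mu th N 0
      ∧ (∀ d, 0 < d → d < dcap → Dcr lam mu th N d > Dcr lam mu th N 0)
      ∧ (∀ d, dcap < d → d < (N : ℝ) / (lam * th) →
          Dcr lam mu th N d < Dcr lam mu th N 0)
      ∧ (∀ d' ∈ Set.Ioo (0 : ℝ) ((N : ℝ) / (lam * th)),
          Dcr lam mu th N d' = Dcr lam mu th N 0 → d' = dcap) := by
  rw [Dcr_eq_G]
  exact G_main (lam*th) mu N hN (mul_pos hlam hth) hmu hgt
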